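/- Let A = a₀ + a₁e₁ + a₂e₂ + a₃e₃ + a₁₂e₁₂ + a₁₃e₁₃ + a₂₃e₂₃ + a₁₂₃I be a multivector in Cl(0,3). Then the product A · reverse(A) · involute(A) · involute(reverse(A)) equals the scalar ((a₀ - a₁₂₃)² + (a₃ + a₁₂)² + (a₂ - a₁₃)² + (a₁ + a₂₃)²) · ((a₀ + a₁₂₃)² + (a₃ - a₁₂)² + (a₂ + a₁₃)² + (a₁ - a₂₃)²) · 1. -/
import Mathlib


open Real CliffordAlgebra

noncomputable section

/-- The quadratic form of signature (0,3): `Q(x) = -(x₁² + x₂² + x₃²)`. -/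
def Q03 : QuadraticForm ℝ (Fin 3 → ℝ) := QuadraticMap.weightedSumSquares ℝ ![-1, -1, -1]

/-- The real Clifford algebra Cl(0,3). -/
abbrev Cl03 := CliffordAlgebra Q03

/-- The canonical (module) topology on the finite-dimensional real algebra Cl(0,3). -/
instance : TopologicalSpace Cl03 := moduleTopology ℝ Cl03

/-- The orthonormal generators `e₁, e₂, e₃` (indexed here by `0, 1, 2`). -/
def e (i : Fin 3) : Cl03 := ι Q03 (Pi.single i 1)

/-- The pseudoscalar `I = e₁e₂e₃`. -/
def I3 : Cl03 := e 0 * e 1 * e 2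

/-- The exponential `exp M = ∑ₖ Mᵏ/k!` in Cl(0,3). -/
def expCl (M : Cl03) : Cl03 := ∑' n : ℕ, (n.factorial : ℝ)⁻¹ • M ^ n

/-- `atan2 y x` is the argument in `(-π, π]` of the complex number `x + iy`. -/
def atan2 (y x : ℝ) : ℝ := Complex.arg ⟨x, y⟩

lemma e_sq (i : Fin 3) : e i * e i = -1 := by
  rw [e, ι_sq_scalar]
  have : Q03 (Pi.single i 1) = -1 := by
    simp [Q03, QuadraticMap.weightedSumSquares_apply, Pi.single_apply]
    fin_cases i <;> simp
  rw [this]; simp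

lemma e_swap {i j : Fin 3} (h : i ≠ j) : e j * e i = -(e i * e j) := by
  have := ι_mul_ι_add_swap (Q := Q03) (Pi.single i 1) (Pi.single j 1)
  have hp : QuadraticMap.polar Q03 (Pi.single i 1) (Pi.single j 1) = 0 := by
    simp [Q03, QuadraticMap.polar, QuadraticMap.weightedSumSquares_apply,
      Fin.sum_univ_three, Pi.single_apply]
    fin_cases i <;> fin_cases j <;> simp_all
  rw [hp] at this
  simp only [map_zero] at this
  rw [e, e]
  linear_combination (norm := noncomm_ring) this

lemma e_cancel (i : Fin 3) (x : Cl03) : e i * (e i * x) = -x := by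
  rw [← mul_assoc, e_sq]; simp

lemma e_swap' {i j : Fin 3} (h : i ≠ j) (x : Cl03) :
    e j * (e i * x) = -(e i * (e j * x)) := by
  rw [← mul_assoc, e_swap h, neg_mul, mul_assoc]

lemma reverse_e (i : Fin 3) : reverse (e i) = e i := reverse_ι _
lemma involute_e (i : Fin 3) : involute (e i) = -(e i) := involute_ι _

/-- the determinant `A·Ã·Â·ÂÃ` of a multivector in Cl(0,3) is a scalar. -/
theorem determinant_Cl03
    (a0 a1 a2 a3 a12 a13 a23 a123 : ℝ) (A : Cl03)
    (hA : A = algebraMap ℝ Cl03 a0 + (a1 • e 0 + a2 • e 1 + a3 • e 2) +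
      (a12 • (e 0 * e 1) + a13 • (e 0 * e 2) + a23 • (e 1 * e 2)) + a123 • I3) :
    A * reverse A * involute A * involute (reverse A) =
      algebraMap ℝ Cl03
        (((a0 - a123) ^ 2 + (a3 + a12) ^ 2 + (a2 - a13) ^ 2 + (a1 + a23) ^ 2) *
          ((a0 + a123) ^ 2 + (a3 - a12) ^ 2 + (a2 + a13) ^ 2 + (a1 - a23) ^ 2)) := by
  have h10 := e_swap' (i := 0) (j := 1) (by decide)
  have h20 := e_swap' (i := 0) (j := 2) (by decide)
  have h21 := e_swap' (i := 1) (j := 2) (by decide)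
  have h10' := e_swap (i := 0) (j := 1) (by decide)
  have h20' := e_swap (i := 0) (j := 2) (by decide)
  have h21' := e_swap (i := 1) (j := 2) (by decide)
  have hB : A * reverse A =
      (a0^2 - a1^2 - a2^2 - a3^2 + a12^2 + a13^2 + a23^2 - a123^2) • (1 : Cl03) +
      (2*(a0*a1 - a2*a12 - a3*a13 + a23*a123)) • e 0 +
      (2*(a0*a2 + a1*a12 - a3*a23 - a13*a123)) • e 1 +
      (2*(a0*a3 + a1*a13 + a2*a23 + a12*a123)) • e 2 := by
    rw [hA]
    simp only [I3, map_add, map_smul, map_neg, reverse.commutes, reverse.map_mul, reverse_e, reverse.map_one, map_one,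
      Algebra.algebraMap_eq_smul_one, mul_add, add_mul, smul_mul_assoc, mul_smul_comm,
      smul_smul, mul_assoc, one_mul, mul_one, mul_neg, neg_mul, smul_neg, neg_neg,
      e_cancel, e_sq, h10, h20, h21, h10', h20', h21']
    match_scalars <;> ring
  have hC : involute A * involute (reverse A) =
      (a0^2 - a1^2 - a2^2 - a3^2 + a12^2 + a13^2 + a23^2 - a123^2) • (1 : Cl03) -
      (2*(a0*a1 - a2*a12 - a3*a13 + a23*a123)) • e 0 -
      (2*(a0*a2 + a1*a12 - a3*a23 - a13*a123)) • e 1 -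
      (2*(a0*a3 + a1*a13 + a2*a23 + a12*a123)) • e 2 := by
    rw [hA]
    simp only [I3, map_add, map_smul, map_neg, reverse.commutes, reverse.map_mul, reverse_e, reverse.map_one, map_one,
      AlgHom.commutes, map_mul, involute_e, sub_eq_add_neg,
      Algebra.algebraMap_eq_smul_one, mul_add, add_mul, smul_mul_assoc, mul_smul_comm,
      smul_smul, mul_assoc, one_mul, mul_one, mul_neg, neg_mul, smul_neg, neg_neg,
      e_cancel, e_sq, h10, h20, h21, h10', h20', h21']
    match_scalars <;> ring
  rw [mul_assoc (A * reverse A), hB, hC]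
  simp only [sub_eq_add_neg, Algebra.algebraMap_eq_smul_one, mul_add, add_mul,
    smul_mul_assoc, mul_smul_comm, smul_smul, mul_assoc, one_mul, mul_one, mul_neg,
    neg_mul, smul_neg, neg_neg, e_cancel, e_sq, h10, h20, h21, h10', h20', h21']
  match_scalars <;> ring
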